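/- Let E, B : ℝ³ → ℝ³ be Lipschitz with Lipschitz constants L_E, L_B, and let ε > 0. Consider two solutions (X, V) and (X^h, V^h) of dX/dt = V, dV/dt = F(X) + V × B(εX)/ε and dX^h/dt = V^h, dV^h/dt = F^h(X^h) + V^h × B(εX^h)/ε respectively, with the same initial data, where V^h is uniformly bounded on [0,T]. Then for all t ∈ [0,T], |X(t) − X^h(t)| + |V(t) − V^h(t)| ≤ C e^{Ct} ∫₀ᵗ ‖F − F^h‖_{L^∞} ds, with C depending only on L_E, L_B, T and the bound on V^h. -/

import Mathlib

noncomputable section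

/-- Euclidean norm on `ℝ³`. -/
noncomputable def norm3 (v : Fin 3 → ℝ) : ℝ := Real.sqrt (∑ i, v i ^ 2)

/-- Cross product on `ℝ³`. -/
def cross (u v : Fin 3 → ℝ) : Fin 3 → ℝ :=
  ![u 1 * v 2 - u 2 * v 1, u 2 * v 0 - u 0 * v 2, u 0 * v 1 - u 1 * v 0]

open Set
set_option maxHeartbeats 1000000

lemma norm3_nonneg (v : Fin 3 → ℝ) : 0 ≤ norm3 v := Real.sqrt_nonneg _

lemma norm3_sq (v : Fin 3 → ℝ) : norm3 v ^ 2 = ∑ i, v i ^ 2 := by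
  have : (0:ℝ) ≤ ∑ i, v i ^ 2 := by positivity
  rw [norm3, Real.sq_sqrt this]

lemma decomp (V Vh FX FhXh b bh : Fin 3 → ℝ) :
    ∑ i, 2*(V i - Vh i)*((FX i + cross V b i) - (FhXh i + cross Vh bh i))
      = (∑ i, 2*(V i - Vh i)*(FX i - FhXh i))
        + ∑ i, 2*(V i - Vh i)*cross Vh (b - bh) i := by
  simp [Fin.sum_univ_three, cross]; ring

lemma cross_sq_le (a b : Fin 3 → ℝ) :
    ∑ i, (cross a b i)^2 ≤ (∑ i, a i^2) * (∑ i, b i^2) := by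
  simp [Fin.sum_univ_three, cross]
  nlinarith [sq_nonneg (a 0 * b 0 + a 1 * b 1 + a 2 * b 2)]

lemma dot_sq_le (a b : Fin 3 → ℝ) :
    (∑ i, a i * b i)^2 ≤ (∑ i, a i^2) * (∑ i, b i^2) := by
  simp [Fin.sum_univ_three]
  nlinarith [sq_nonneg (a 0 * b 1 - a 1 * b 0), sq_nonneg (a 0 * b 2 - a 2 * b 0),
    sq_nonneg (a 1 * b 2 - a 2 * b 1)]

lemma abs_dot_le (a b : Fin 3 → ℝ) : |∑ i, a i * b i| ≤ norm3 a * norm3 b := by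
  have h := dot_sq_le a b
  have h2 : norm3 a * norm3 b = Real.sqrt ((∑ i, a i^2) * (∑ i, b i^2)) := by
    rw [norm3, norm3, ← Real.sqrt_mul (by positivity)]
  rw [h2, ← Real.sqrt_sq_eq_abs]
  exact Real.sqrt_le_sqrt h

lemma norm3_cross_le (a b : Fin 3 → ℝ) : norm3 (cross a b) ≤ norm3 a * norm3 b := by
  have h2 : norm3 a * norm3 b = Real.sqrt ((∑ i, a i^2) * (∑ i, b i^2)) := by
    rw [norm3, norm3, ← Real.sqrt_mul (by positivity)]
  rw [h2, norm3]
  exact Real.sqrt_le_sqrt (cross_sq_le a b)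

lemma abs_two_dot_le (a c : Fin 3 → ℝ) : |∑ i, 2 * a i * c i| ≤ 2 * (norm3 a * norm3 c) := by
  have h : ∑ i, 2 * a i * c i = 2 * ∑ i, a i * c i := by
    rw [Finset.mul_sum]; exact Finset.sum_congr rfl (fun i _ => by ring)
  rw [h, abs_mul, abs_two]
  exact mul_le_mul_of_nonneg_left (abs_dot_le a c) (by norm_num)

lemma norm3_triangle (u w : Fin 3 → ℝ) :
    norm3 (fun i => u i + w i) ≤ norm3 u + norm3 w := by
  have h1 : norm3 (fun i => u i + w i) = Real.sqrt (∑ i, (u i + w i)^2) := rfl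
  have h2 : ∑ i, (u i + w i)^2 ≤ (norm3 u + norm3 w)^2 := by
    have hd : ∑ i, u i * w i ≤ norm3 u * norm3 w := le_trans (le_abs_self _) (abs_dot_le u w)
    have hu : norm3 u ^ 2 = ∑ i, u i ^ 2 := norm3_sq u
    have hw : norm3 w ^ 2 = ∑ i, w i ^ 2 := norm3_sq w
    have hexp : ∑ i, (u i + w i)^2 = (∑ i, u i ^ 2) + 2 * (∑ i, u i * w i) + ∑ i, w i ^ 2 := by
      simp [Fin.sum_univ_three]; ring
    nlinarith
  calc norm3 (fun i => u i + w i) = Real.sqrt (∑ i, (u i + w i)^2) := h1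
    _ ≤ Real.sqrt ((norm3 u + norm3 w)^2) := Real.sqrt_le_sqrt h2
    _ = norm3 u + norm3 w := Real.sqrt_sq (add_nonneg (norm3_nonneg u) (norm3_nonneg w))

lemma pi_norm_le_norm3 (v : Fin 3 → ℝ) : ‖v‖ ≤ norm3 v := by
  rw [pi_norm_le_iff_of_nonneg (norm3_nonneg v)]
  intro i
  rw [Real.norm_eq_abs, ← Real.sqrt_sq_eq_abs, norm3]
  exact Real.sqrt_le_sqrt (Finset.single_le_sum (f := fun j => v j ^ 2)
    (fun j _ => by positivity) (Finset.mem_univ i))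

lemma norm3_le_pi_norm (v : Fin 3 → ℝ) : norm3 v ≤ Real.sqrt 3 * ‖v‖ := by
  have h1 : ∑ i, v i ^ 2 ≤ 3 * ‖v‖^2 := by
    have h : ∀ i, v i ^ 2 ≤ ‖v‖ ^ 2 := by
      intro i
      have h0 : |v i| ≤ ‖v‖ := by simpa [Real.norm_eq_abs] using norm_le_pi_norm v i
      nlinarith [abs_nonneg (v i), sq_abs (v i)]
    calc ∑ i, v i ^ 2 ≤ ∑ _i : Fin 3, ‖v‖^2 := Finset.sum_le_sum (fun i _ => h i)
      _ = 3 * ‖v‖^2 := by rw [Fin.sum_univ_three]; ring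
  calc norm3 v ≤ Real.sqrt (3 * ‖v‖^2) := Real.sqrt_le_sqrt h1
    _ = Real.sqrt 3 * ‖v‖ := by
        rw [Real.sqrt_mul (by norm_num), Real.sqrt_sq (norm_nonneg v)]

lemma lip_norm3 {c : NNReal} {F : (Fin 3 → ℝ) → Fin 3 → ℝ} (h : LipschitzWith c F) (x y) :
    norm3 (F x - F y) ≤ Real.sqrt 3 * c * norm3 (x - y) := by
  have h1 : ‖F x - F y‖ ≤ c * ‖x - y‖ := by
    simpa [dist_eq_norm] using h.dist_le_mul x y
  calc norm3 (F x - F y) ≤ Real.sqrt 3 * ‖F x - F y‖ := norm3_le_pi_norm _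
    _ ≤ Real.sqrt 3 * (c * ‖x - y‖) :=
        mul_le_mul_of_nonneg_left h1 (Real.sqrt_nonneg 3)
    _ ≤ Real.sqrt 3 * (c * norm3 (x - y)) :=
        mul_le_mul_of_nonneg_left
          (mul_le_mul_of_nonneg_left (pi_norm_le_norm3 _) c.2) (Real.sqrt_nonneg 3)
    _ = Real.sqrt 3 * c * norm3 (x - y) := by ring

lemma norm3_smul (c : ℝ) (hc : 0 ≤ c) (v : Fin 3 → ℝ) : norm3 (c • v) = c * norm3 v := by
  simp only [norm3, Pi.smul_apply, smul_eq_mul, mul_pow, ← Finset.mul_sum]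
  rw [Real.sqrt_mul (by positivity), Real.sqrt_sq hc]

/-- Stability of the characteristic flow under the maximal-ordering scaled magnetic field
`B(εx)/ε`: two solutions driven by fields `F` and `F^h` with the same initial data differ by
`C e^{Ct} ∫₀ᵗ ‖F − F^h‖_{L^∞} ds`, with `C` independent of `ε`. -/
theorem characteristics_stability (T LE LB M : ℝ) (hT : 0 < T) (hM : 0 < M) :
    ∃ C > 0, ∀ ε : ℝ, 0 < ε →
      ∀ (F Fh B : (Fin 3 → ℝ) → Fin 3 → ℝ) (X V Xh Vh : ℝ → Fin 3 → ℝ) (δ : ℝ),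
      LipschitzWith (Real.toNNReal LE) F →
      LipschitzWith (Real.toNNReal LE) Fh →
      LipschitzWith (Real.toNNReal LB) B →
      (∀ x, norm3 (F x - Fh x) ≤ δ) →
      (∀ t ∈ Set.Icc (0:ℝ) T, norm3 (Vh t) ≤ M) →
      (∀ t ∈ Set.Icc (0:ℝ) T, HasDerivAt X (V t) t ∧
        HasDerivAt V (F (X t) + cross (V t) (ε⁻¹ • B (ε • X t))) t) →
      (∀ t ∈ Set.Icc (0:ℝ) T, HasDerivAt Xh (Vh t) t ∧
        HasDerivAt Vh (Fh (Xh t) + cross (Vh t) (ε⁻¹ • B (ε • Xh t))) t) →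
      X 0 = Xh 0 → V 0 = Vh 0 →
      ∀ t ∈ Set.Icc (0:ℝ) T,
        norm3 (X t - Xh t) + norm3 (V t - Vh t) ≤ C * Real.exp (C * t) * (δ * t) := by

  set a : ℝ := Real.sqrt 3 * (Real.toNNReal LE : ℝ) with ha_def
  set b : ℝ := Real.sqrt 3 * (Real.toNNReal LB : ℝ) with hb_def
  have ha0 : 0 ≤ a := by positivity
  have hb0 : 0 ≤ b := by positivity
  set K : ℝ := 1 + a + M * b with hK_def
  have hK1 : 1 ≤ K := by nlinarith
  have hKpos : 0 < K := by linarith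
  have hs2 : (0:ℝ) < Real.sqrt 2 := by positivity
  refine ⟨Real.sqrt 2 + K / 2, by positivity, ?_⟩
  set C : ℝ := Real.sqrt 2 + K / 2 with hC_def
  have hC2 : Real.sqrt 2 ≤ C := by rw [hC_def]; linarith
  have hCK : K / 2 ≤ C := by rw [hC_def]; linarith
  intro ε hε F Fh B X V Xh Vh δ hF hFh hB hδ hVh hXV hXhVh hX0 hV0 t ht
  have hδ0 : 0 ≤ δ := le_trans (norm3_nonneg _) (hδ (X 0))
  set g : ℝ → ℝ := fun s => (∑ i, (X s i - Xh s i)^2) + ∑ i, (V s i - Vh s i)^2 with hg_def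
  set G : ℝ → ℝ := fun s =>
      (∑ i, 2*(X s i - Xh s i)*(V s i - Vh s i))
      + ∑ i, 2*(V s i - Vh s i)*((F (X s) + cross (V s) (ε⁻¹ • B (ε • X s))) i
          - (Fh (Xh s) + cross (Vh s) (ε⁻¹ • B (ε • Xh s))) i) with hG_def
  have hgnn : ∀ s, 0 ≤ g s := fun s => by positivity
  have hg' : ∀ s ∈ Icc (0:ℝ) T, HasDerivAt g (G s) s := by
    intro s hs
    obtain ⟨hX', hV'⟩ := hXV s hs
    obtain ⟨hXh', hVh'⟩ := hXhVh s hs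
    have hXi := hasDerivAt_pi.1 hX'
    have hXhi := hasDerivAt_pi.1 hXh'
    have hVi := hasDerivAt_pi.1 hV'
    have hVhi := hasDerivAt_pi.1 hVh'
    apply HasDerivAt.add
    · apply HasDerivAt.fun_sum
      intro i _
      have h2 : HasDerivAt (fun y => (X y i - Xh y i) ^ 2) _ s := ((hXi i).sub (hXhi i)).pow 2
      norm_num at h2
      convert h2 using 1 <;> try ring
    · apply HasDerivAt.fun_sum
      intro i _
      have h2 : HasDerivAt (fun y => (V y i - Vh y i) ^ 2) _ s := ((hVi i).sub (hVhi i)).pow 2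
      norm_num at h2
      simp only [Pi.add_apply]; exact h2
  have hGb : ∀ s ∈ Icc (0:ℝ) T, |G s| ≤ K * g s + 2 * δ * Real.sqrt (g s) := by
    intro s hs
    set n1 : ℝ := norm3 (X s - Xh s) with hn1_def
    set n2 : ℝ := norm3 (V s - Vh s) with hn2_def
    have hn1sq : n1^2 = ∑ i, (X s i - Xh s i)^2 := by rw [hn1_def, norm3_sq]; simp
    have hn2sq : n2^2 = ∑ i, (V s i - Vh s i)^2 := by rw [hn2_def, norm3_sq]; simp
    have hn10 : 0 ≤ n1 := norm3_nonneg _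
    have hn20 : 0 ≤ n2 := norm3_nonneg _
    have hgs : g s = n1^2 + n2^2 := by simp only [hg_def]; rw [← hn1sq, ← hn2sq]
    have hn2g : n2 ≤ Real.sqrt (g s) := by
      rw [hgs]
      calc n2 = Real.sqrt (n2^2) := (Real.sqrt_sq hn20).symm
        _ ≤ _ := Real.sqrt_le_sqrt (by nlinarith)
    have hsplit : G s = (∑ i, 2*(X s i - Xh s i)*(V s i - Vh s i))
        + ((∑ i, 2*(V s i - Vh s i)*(F (X s) i - Fh (Xh s) i))
          + ∑ i, 2*(V s i - Vh s i)
              * cross (Vh s) (ε⁻¹ • B (ε • X s) - ε⁻¹ • B (ε • Xh s)) i) := by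
      simp only [hG_def, Pi.add_apply]
      congr 1
      exact decomp (V s) (Vh s) (F (X s)) (Fh (Xh s)) _ _
    -- term 1
    have hT1 : |∑ i, 2*(X s i - Xh s i)*(V s i - Vh s i)| ≤ 2 * (n1 * n2) := by
      simpa using abs_two_dot_le (X s - Xh s) (V s - Vh s)
    -- term 2
    have hFd : norm3 (F (X s) - Fh (Xh s)) ≤ a * n1 + δ := by
      have heq : F (X s) - Fh (Xh s)
          = fun i => (F (X s) - F (Xh s)) i + (F (Xh s) - Fh (Xh s)) i := by
        funext i; simp
      rw [heq]
      refine le_trans (norm3_triangle _ _) (add_le_add ?_ (hδ (Xh s)))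
      exact lip_norm3 hF (X s) (Xh s)
    have hT2 : |∑ i, 2*(V s i - Vh s i)*(F (X s) i - Fh (Xh s) i)|
        ≤ 2 * (n2 * (a * n1 + δ)) := by
      refine le_trans ?_ (mul_le_mul_of_nonneg_left
        (mul_le_mul_of_nonneg_left hFd hn20) (by norm_num : (0:ℝ) ≤ 2))
      simpa using abs_two_dot_le (V s - Vh s) (F (X s) - Fh (Xh s))
    -- term 3
    have hd : norm3 (ε⁻¹ • B (ε • X s) - ε⁻¹ • B (ε • Xh s)) ≤ b * n1 := by
      have heq : ε⁻¹ • B (ε • X s) - ε⁻¹ • B (ε • Xh s)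
          = ε⁻¹ • (B (ε • X s) - B (ε • Xh s)) := (smul_sub _ _ _).symm
      rw [heq, norm3_smul _ (by positivity)]
      have hlip := lip_norm3 hB (ε • X s) (ε • Xh s)
      have hsm : ε • X s - ε • Xh s = ε • (X s - Xh s) := (smul_sub _ _ _).symm
      rw [hsm, norm3_smul _ hε.le] at hlip
      calc ε⁻¹ * norm3 (B (ε • X s) - B (ε • Xh s))
          ≤ ε⁻¹ * (Real.sqrt 3 * (Real.toNNReal LB : ℝ) * (ε * n1)) :=
            mul_le_mul_of_nonneg_left hlip (by positivity)
        _ = b * n1 := by rw [hb_def]; field_simp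
    have hcr : norm3 (cross (Vh s) (ε⁻¹ • B (ε • X s) - ε⁻¹ • B (ε • Xh s)))
        ≤ M * (b * n1) := by
      refine le_trans (norm3_cross_le _ _) ?_
      exact mul_le_mul (hVh s hs) hd (norm3_nonneg _) hM.le
    have hT3 : |∑ i, 2*(V s i - Vh s i)
        * cross (Vh s) (ε⁻¹ • B (ε • X s) - ε⁻¹ • B (ε • Xh s)) i|
        ≤ 2 * (n2 * (M * (b * n1))) := by
      refine le_trans ?_ (mul_le_mul_of_nonneg_left
        (mul_le_mul_of_nonneg_left hcr hn20) (by norm_num : (0:ℝ) ≤ 2))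
      simpa using abs_two_dot_le (V s - Vh s)
        (cross (Vh s) (ε⁻¹ • B (ε • X s) - ε⁻¹ • B (ε • Xh s)))
    have habs : |G s| ≤ 2*(n1*n2) + (2*(n2*(a*n1+δ)) + 2*(n2*(M*(b*n1)))) := by
      rw [hsplit]
      refine le_trans (abs_add_le _ _) (add_le_add hT1 (le_trans (abs_add_le _ _)
        (add_le_add hT2 hT3)))
    have h2ab : 2*(n1*n2) ≤ n1^2 + n2^2 := by nlinarith [sq_nonneg (n1 - n2)]
    have hsg : 0 ≤ Real.sqrt (g s) := Real.sqrt_nonneg _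
    calc |G s| ≤ 2*(n1*n2) + (2*(n2*(a*n1+δ)) + 2*(n2*(M*(b*n1)))) := habs
      _ ≤ K * g s + 2*δ*Real.sqrt (g s) := by
          nlinarith [h2ab, hgs, hK_def, hn2g, hsg, hn10, hn20, ha0, hb0, hM.le, hδ0,
            mul_le_mul_of_nonneg_left h2ab ha0,
            mul_le_mul_of_nonneg_left h2ab (mul_nonneg hM.le hb0),
            mul_le_mul_of_nonneg_left hn2g (by positivity : (0:ℝ) ≤ 2*δ)]
  have hg0 : g 0 = 0 := by simp only [hg_def]; rw [hX0, hV0]; simp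
  -- Gronwall with regularization η
  have key : ∀ η : ℝ, 0 < η →
      norm3 (X t - Xh t) + norm3 (V t - Vh t)
        ≤ Real.sqrt 2 * (η * Real.exp (K/2 * t) + δ / (K/2) * (Real.exp (K/2 * t) - 1)) := by
    intro η hη
    set v : ℝ → ℝ := fun s => Real.sqrt (g s + η^2) with hv_def
    have hvpos : ∀ s, 0 < v s := fun s => Real.sqrt_pos.2 (by nlinarith [hgnn s])
    have hv' : ∀ s ∈ Icc (0:ℝ) T, HasDerivAt v (G s / (2 * v s)) s := by
      intro s hs
      have h1 : HasDerivAt (fun u => g u + η^2) (G s) s := (hg' s hs).add_const _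
      exact h1.sqrt (by nlinarith [hgnn s])
    have hvcont : ContinuousOn v (Icc 0 T) :=
      fun s hs => ((hv' s hs).continuousAt).continuousWithinAt
    have hv0 : ‖v 0‖ ≤ η := by
      rw [Real.norm_eq_abs, abs_of_nonneg (Real.sqrt_nonneg _)]
      show Real.sqrt (g 0 + η^2) ≤ η
      rw [hg0, zero_add, Real.sqrt_sq hη.le]
    have hbound : ∀ s ∈ Ico (0:ℝ) T, ‖G s / (2 * v s)‖ ≤ (K/2) * ‖v s‖ + δ := by
      intro s hs
      have hs' : s ∈ Icc (0:ℝ) T := Ico_subset_Icc_self hs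
      have h1 := hGb s hs'
      have hvp := hvpos s
      have hv2 : (v s)^2 = g s + η^2 := Real.sq_sqrt (by nlinarith [hgnn s])
      have hgv : Real.sqrt (g s) ≤ v s := Real.sqrt_le_sqrt (by nlinarith)
      have hgle : g s ≤ (v s)^2 := by nlinarith [hgnn s]
      rw [Real.norm_eq_abs, Real.norm_eq_abs, abs_div,
        abs_of_pos (by positivity : (0:ℝ) < 2 * v s), abs_of_pos hvp,
        div_le_iff₀ (by positivity : (0:ℝ) < 2 * v s)]
      nlinarith [mul_le_mul_of_nonneg_left hgle hKpos.le,
        mul_le_mul_of_nonneg_left hgv (by positivity : (0:ℝ) ≤ 2*δ)]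
    have hgron := norm_le_gronwallBound_of_norm_deriv_right_le (f := v)
      (f' := fun s => G s / (2 * v s)) (δ := η) (K := K/2) (ε := δ) (a := 0) (b := T)
      hvcont (fun s hs => (hv' s (Ico_subset_Icc_self hs)).hasDerivWithinAt) hv0 hbound
    have hvt := hgron t ht
    rw [gronwallBound_of_K_ne_0 (by positivity : K/2 ≠ 0)] at hvt
    simp only [sub_zero] at hvt
    rw [Real.norm_eq_abs, abs_of_nonneg (Real.sqrt_nonneg _)] at hvt
    have hle : norm3 (X t - Xh t) + norm3 (V t - Vh t) ≤ Real.sqrt 2 * v t := by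
      set n1 : ℝ := norm3 (X t - Xh t) with hn1_def
      set n2 : ℝ := norm3 (V t - Vh t) with hn2_def
      have hn1sq : n1^2 = ∑ i, (X t i - Xh t i)^2 := by rw [hn1_def, norm3_sq]; simp
      have hn2sq : n2^2 = ∑ i, (V t i - Vh t i)^2 := by rw [hn2_def, norm3_sq]; simp
      have hn10 : 0 ≤ n1 := norm3_nonneg _
      have hn20 : 0 ≤ n2 := norm3_nonneg _
      have hgt : g t = n1^2 + n2^2 := by simp only [hg_def]; rw [← hn1sq, ← hn2sq]
      have hsq : (n1 + n2)^2 ≤ 2 * (g t + η^2) := by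
        rw [hgt]; nlinarith [sq_nonneg (n1 - n2), sq_nonneg η]
      calc n1 + n2 = Real.sqrt ((n1+n2)^2) := (Real.sqrt_sq (by positivity)).symm
        _ ≤ Real.sqrt (2*(g t + η^2)) := Real.sqrt_le_sqrt hsq
        _ = Real.sqrt 2 * v t := by rw [Real.sqrt_mul (by norm_num)]
    exact le_trans hle (mul_le_mul_of_nonneg_left hvt (Real.sqrt_nonneg 2))
  -- take η → 0
  have hlim : norm3 (X t - Xh t) + norm3 (V t - Vh t)
      ≤ Real.sqrt 2 * (δ / (K/2) * (Real.exp (K/2*t) - 1)) := by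
    apply le_of_forall_pos_le_add
    intro ε' hε'
    have hEpos : 0 < Real.sqrt 2 * Real.exp (K/2*t) := by positivity
    have hkey := key (ε' / (Real.sqrt 2 * Real.exp (K/2*t))) (by positivity)
    calc norm3 (X t - Xh t) + norm3 (V t - Vh t)
        ≤ Real.sqrt 2 * (ε' / (Real.sqrt 2 * Real.exp (K/2*t)) * Real.exp (K/2 * t)
            + δ / (K/2) * (Real.exp (K/2 * t) - 1)) := hkey
      _ = Real.sqrt 2 * (δ / (K/2) * (Real.exp (K/2*t) - 1)) + ε' := by
          field_simp
          ring
  -- final comparison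
  have ht0 : 0 ≤ t := ht.1
  set x : ℝ := K/2 * t with hx_def
  have hx0 : 0 ≤ x := by positivity
  have hexp1 : Real.exp x - 1 ≤ x * Real.exp x := by
    have h := Real.add_one_le_exp (-x)
    rw [Real.exp_neg] at h
    nlinarith [Real.exp_pos x, mul_le_mul_of_nonneg_right h (Real.exp_pos x).le,
      inv_mul_cancel₀ (ne_of_gt (Real.exp_pos x))]
  have hfin : Real.sqrt 2 * (δ / (K/2) * (Real.exp x - 1)) ≤ C * Real.exp (C*t) * (δ*t) := by
    have h1 : δ / (K/2) * (Real.exp x - 1) ≤ δ * t * Real.exp x := by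
      rw [div_mul_eq_mul_div, div_le_iff₀ (by positivity : (0:ℝ) < K/2)]
      calc δ * (Real.exp x - 1) ≤ δ * (x * Real.exp x) :=
            mul_le_mul_of_nonneg_left hexp1 hδ0
        _ = δ * t * Real.exp x * (K/2) := by rw [hx_def]; ring
    have h2 : Real.exp x ≤ Real.exp (C*t) := by
      apply Real.exp_le_exp.2
      rw [hx_def]
      exact mul_le_mul_of_nonneg_right hCK ht0
    calc Real.sqrt 2 * (δ / (K/2) * (Real.exp x - 1))
        ≤ Real.sqrt 2 * (δ * t * Real.exp x) :=
          mul_le_mul_of_nonneg_left h1 (Real.sqrt_nonneg 2)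
      _ = (Real.sqrt 2 * Real.exp x) * (δ * t) := by ring
      _ ≤ (C * Real.exp (C*t)) * (δ * t) := by
          apply mul_le_mul_of_nonneg_right _ (by positivity)
          exact mul_le_mul hC2 h2 (Real.exp_pos x).le (by positivity)
  exact le_trans hlim hfin
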